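/- For every b ≥ 1, 3^(T(b)) ≡ T(b) (mod 10^(b-1)) where T is base-3 tetration; equivalently, the map x ↦ 3^x stabilizes the residue of T(b) modulo 10^(b-1). -/
import Mathlib


def T : ℕ → ℕ
  | 0 => 1
  | b + 1 => 3 ^ T b

lemma binom_aux (t : ℤ) : ∀ m : ℕ, t ^ 2 ∣ (1 + t) ^ m - (1 + m * t) := by
  intro m
  induction m with
  | zero => simp
  | succ m ih =>
    have h : (1 + t) ^ (m + 1) - (1 + (m + 1 : ℕ) * t)
        = (1 + t) * ((1 + t) ^ m - (1 + m * t)) + m * t ^ 2 := by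
      push_cast; ring
    rw [h]
    exact dvd_add (Dvd.dvd.mul_left ih _) (Dvd.dvd.mul_left dvd_rfl _)

lemma key (a n p : ℕ) (hp : p ∣ n) (h : a ≡ 1 [MOD n]) : a ^ p ≡ 1 [MOD p * n] := by
  have h' : (n : ℤ) ∣ (a : ℤ) - 1 := by
    have := (Nat.modEq_iff_dvd (a := 1) (b := a) (n := n)).mp h.symm
    simpa using this
  obtain ⟨c, hc⟩ := h'
  obtain ⟨d, hd⟩ := hp
  have h1 : ((p : ℤ) * n) ∣ ((a : ℤ) - 1) ^ 2 := by
    refine ⟨d * c ^ 2, ?_⟩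
    rw [hc]
    have hd' : (n : ℤ) = p * d := by exact_mod_cast hd
    rw [hd']
    ring
  have h2 := binom_aux ((a : ℤ) - 1) p
  have ha : (1 : ℤ) + ((a : ℤ) - 1) = (a : ℤ) := by ring
  rw [ha] at h2
  have h3 : ((p : ℤ) * n) ∣ (a : ℤ) ^ p - 1 := by
    have heq : (a : ℤ) ^ p - 1
        = ((a : ℤ) ^ p - (1 + p * ((a : ℤ) - 1))) + p * ((a : ℤ) - 1) := by ring
    rw [heq]
    exact dvd_add (dvd_trans h1 h2) (by rw [hc]; exact ⟨c, by ring⟩)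
  have : (1 : ℕ) ≡ a ^ p [MOD p * n] := by
    rw [Nat.modEq_iff_dvd]
    push_cast
    exact h3
  exact this.symm

-- 3 ^ (4 * 5 ^ k) ≡ 1 mod 5 ^ (k + 1)
lemma A5 : ∀ k : ℕ, 3 ^ (4 * 5 ^ k) ≡ 1 [MOD 5 ^ (k + 1)] := by
  intro k
  induction k with
  | zero => decide
  | succ k ih =>
    have h : 3 ^ (4 * 5 ^ (k + 1)) = (3 ^ (4 * 5 ^ k)) ^ 5 := by
      rw [← pow_mul]; ring_nf
    rw [h]
    have hk := key (3 ^ (4 * 5 ^ k)) (5 ^ (k + 1)) 5 (dvd_pow_self 5 (Nat.succ_ne_zero k)) ih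
    rw [show (5:ℕ) ^ (k + 1 + 1) = 5 * 5 ^ (k + 1) by ring]
    exact hk

-- 3 ^ (2 ^ (k+1)) ≡ 1 mod 2 ^ (k + 3)
lemma A2 : ∀ k : ℕ, 3 ^ (2 ^ (k + 1)) ≡ 1 [MOD 2 ^ (k + 3)] := by
  intro k
  induction k with
  | zero => decide
  | succ k ih =>
    have h : 3 ^ (2 ^ (k + 2)) = (3 ^ (2 ^ (k + 1))) ^ 2 := by
      rw [← pow_mul]; ring_nf
    rw [h]
    have hk := key (3 ^ (2 ^ (k + 1))) (2 ^ (k + 3)) 2 (dvd_pow_self 2 (by omega)) ih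
    rw [show (2:ℕ) ^ (k + 1 + 3) = 2 * 2 ^ (k + 3) by ring]
    exact hk

-- if a^e ≡ 1 mod n and x ≡ y mod e then a^x ≡ a^y mod n
lemma pow_congr (a e n x y : ℕ) (he : a ^ e ≡ 1 [MOD n]) (hxy : x ≡ y [MOD e])
    (hepos : 0 < e) : a ^ x ≡ a ^ y [MOD n] := by
  have hx : x = e * (x / e) + x % e := (Nat.div_add_mod x e).symm
  have hy : y = e * (y / e) + y % e := (Nat.div_add_mod y e).symm
  have hr : x % e = y % e := hxy
  have gen : ∀ z : ℕ, a ^ z ≡ a ^ (z % e) [MOD n] := by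
    intro z
    conv_lhs => rw [(Nat.div_add_mod z e).symm]
    rw [pow_add, pow_mul]
    calc (a ^ e) ^ (z / e) * a ^ (z % e)
        ≡ 1 ^ (z / e) * a ^ (z % e) [MOD n] := (he.pow _).mul_right _
      _ = a ^ (z % e) := by rw [one_pow, one_mul]
  calc a ^ x ≡ a ^ (x % e) [MOD n] := gen x
    _ = a ^ (y % e) := by rw [hr]
    _ ≡ a ^ y [MOD n] := (gen y).symm

lemma step (c x y : ℕ) (h : x ≡ y [MOD 2 ^ (c + 2) * 5 ^ c]) :
    3 ^ x ≡ 3 ^ y [MOD 2 ^ (c + 3) * 5 ^ (c + 1)] := by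
  have h2 : 3 ^ x ≡ 3 ^ y [MOD 2 ^ (c + 3)] := by
    apply pow_congr 3 (2 ^ (c + 1)) _ _ _ (A2 c)
    · exact h.of_dvd (Dvd.dvd.mul_right (pow_dvd_pow 2 (by omega)) _)
    · positivity
  have h5 : 3 ^ x ≡ 3 ^ y [MOD 5 ^ (c + 1)] := by
    apply pow_congr 3 (4 * 5 ^ c) _ _ _ (A5 c)
    · -- x ≡ y mod 4 * 5^c : combine mod 4 and mod 5^c
      have hm4 : x ≡ y [MOD 4] := h.of_dvd (Dvd.dvd.mul_right ⟨2 ^ c, by ring⟩ _)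
      have hm5 : x ≡ y [MOD 5 ^ c] := h.of_dvd (Dvd.dvd.mul_left dvd_rfl _)
      have hcop : Nat.Coprime 4 (5 ^ c) :=
        Nat.Coprime.pow_right _ (by decide)
      exact (Nat.modEq_and_modEq_iff_modEq_mul hcop).mp ⟨hm4, hm5⟩
    · positivity
  have hcop : Nat.Coprime (2 ^ (c + 3)) (5 ^ (c + 1)) := by
    apply Nat.Coprime.pow; norm_num
  exact (Nat.modEq_and_modEq_iff_modEq_mul hcop).mp ⟨h2, h5⟩

lemma S : ∀ c : ℕ, 3 ^ T (c + 1) ≡ T (c + 1) [MOD 2 ^ (c + 2) * 5 ^ c] := by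
  intro c
  induction c with
  | zero => decide
  | succ c ih =>
    have hstep := step c _ _ ih
    have hT : T (c + 2) = 3 ^ T (c + 1) := rfl
    rw [hT]
    exact hstep

theorem stmt12 : ∀ b : ℕ, 1 ≤ b → 3 ^ T b ≡ T b [MOD 10 ^ (b - 1)] := by
  intro b hb
  obtain ⟨c, rfl⟩ := Nat.exists_eq_add_of_le hb
  simp only [Nat.add_sub_cancel_left] at *
  have := S c
  have hdvd : 10 ^ c ∣ 2 ^ (c + 2) * 5 ^ c := by
    have : (10 : ℕ) ^ c = 2 ^ c * 5 ^ c := by rw [show (10:ℕ) = 2 * 5 from rfl, mul_pow]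
    rw [this]
    exact Nat.mul_dvd_mul (pow_dvd_pow 2 (by omega)) dvd_rfl
  have := this.of_dvd hdvd
  simpa [Nat.add_comm 1 c] using this
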